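/- Let 0 < δ < 1 and let d ≥ 1, n ≥ d be integers, and set L = log₂ log₂ (2d/δ). Define Δ_i = 2^{2^{i²}} for i ≥ 1. Let (Q_i)_{i≥1} be independent random subsets of [n], where Q_i includes each element of [n] independently with probability 1 − 2^{−1/Δ_i}. Fix I ⊆ [n] with |I| = d, let i₀ be the least index i with Q_i ∩ I = ∅ (almost surely finite), and set D = 2·Δ_{i₀}·log₂(2/δ). Then E[i₀] ≤ √L + 3, and with probability at least 1 − δ, d ≤ D ≤ 2·(2d/δ)^{ 2^{ 2√L + 1 } }·log₂(2/δ). -/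

import Mathlib

open Finset MeasureTheory

lemma prodIte {n : ℕ} (u t : Finset (Fin n)) (x y : ℝ) :
    ∏ j ∈ u, (if j ∈ t then x else y) = x ^ (u ∩ t).card * y ^ (u \ t).card := by
  rw [Finset.prod_ite (fun _ => x) (fun _ => y), Finset.prod_const, Finset.prod_const,
    Finset.filter_mem_eq_inter, Finset.sdiff_eq_filter]

lemma sumW {n : ℕ} (a : ℝ) (T : Finset (Fin n)) :
    ∑ s ∈ T.powerset, ∏ j : Fin n, (if j ∈ s then 1 - a else a) = a ^ (Tᶜ.card) := by
  have key : ∀ s ∈ T.powerset,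
      ∏ j : Fin n, (if j ∈ s then 1 - a else a)
        = a ^ (Tᶜ.card) * ((∏ j ∈ s, (1 - a)) * ∏ j ∈ T \ s, a) := by
    intro s hs
    rw [Finset.mem_powerset] at hs
    rw [← Finset.prod_mul_prod_compl T (fun j => if j ∈ s then 1 - a else a)]
    have h1 : ∏ j ∈ Tᶜ, (if j ∈ s then 1 - a else a) = a ^ Tᶜ.card := by
      rw [Finset.prod_congr rfl (fun j hj => ?_), Finset.prod_const]
      rw [if_neg]
      intro hjs
      exact (Finset.mem_compl.mp hj) (hs hjs)
    have h2 : ∏ j ∈ T, (if j ∈ s then 1 - a else a)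
        = (∏ j ∈ s, (1 - a)) * ∏ j ∈ T \ s, a := by
      rw [prodIte, Finset.prod_const, Finset.prod_const,
        Finset.inter_eq_right.mpr hs]
    rw [h1, h2]; ring
  rw [Finset.sum_congr rfl key, ← Finset.mul_sum]
  have := Finset.prod_add (fun _ : Fin n => 1 - a) (fun _ => a) T
  simp only [sub_add_cancel, Finset.prod_const_one] at this
  rw [← this, mul_one]

lemma sumW_univ {n : ℕ} (a : ℝ) :
    ∑ s : Finset (Fin n), ∏ j : Fin n, (if j ∈ s then 1 - a else a) = 1 := by
  have := sumW a (Finset.univ : Finset (Fin n))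
  simp only [Finset.powerset_univ, Finset.compl_univ, Finset.card_empty, pow_zero] at this
  exact this

lemma ennreal_cancel {x y p q : ENNReal} (hx : x ≤ p) (hy : y ≤ q)
    (h : p + q ≤ x + y) (hp : p ≠ ⊤) (hq : q ≠ ⊤) : x = p ∧ y = q := by
  constructor
  · refine le_antisymm hx ?_
    have : p + q ≤ x + q := le_trans h (add_le_add_right hy x)
    exact (ENNReal.add_le_add_iff_right hq).mp this
  · refine le_antisymm hy ?_
    have : p + q ≤ p + y := le_trans h (add_le_add_left hx y)
    exact (ENNReal.add_le_add_iff_left hp).mp this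

lemma meas_QI {n : ℕ} {Ω : Type} [MeasurableSpace Ω] (μ : Measure Ω) [IsProbabilityMeasure μ]
    (X : Ω → Finset (Fin n)) (a : ℝ) (ha0 : 0 ≤ a) (ha1 : a ≤ 1)
    (hX : ∀ s, μ {ω | X ω = s} = ENNReal.ofReal (∏ j : Fin n, if j ∈ s then 1 - a else a))
    (I : Finset (Fin n)) :
    μ {ω | X ω ∩ I = ∅} = ENNReal.ofReal (a ^ I.card) ∧
    μ {ω | X ω ∩ I ≠ ∅} = ENNReal.ofReal (1 - a ^ I.card) := by
  set W : Finset (Fin n) → ℝ := fun s => ∏ j : Fin n, (if j ∈ s then 1 - a else a) with hW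
  have hWnn : ∀ s, 0 ≤ W s := by
    intro s
    refine Finset.prod_nonneg fun j _ => ?_
    split <;> [linarith; exact ha0]
  have hmem : ∀ s : Finset (Fin n), s ∈ Iᶜ.powerset ↔ s ∩ I = ∅ := by
    intro s
    rw [Finset.mem_powerset]
    constructor
    · intro h
      ext j
      simp only [Finset.mem_inter, Finset.notMem_empty, iff_false, not_and]
      intro hjs hjI
      exact (Finset.mem_compl.mp (h hjs)) hjI
    · intro h j hjs
      rw [Finset.mem_compl]
      intro hjI
      have hj : j ∈ s ∩ I := Finset.mem_inter.mpr ⟨hjs, hjI⟩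
      rw [h] at hj
      exact absurd hj (Finset.notMem_empty j)
  have hsum1 : ∑ s ∈ Iᶜ.powerset, W s = a ^ I.card := by
    rw [sumW a Iᶜ, compl_compl]
  have hpd : a ^ I.card ≤ 1 := pow_le_one₀ ha0 ha1
  have hsum2 : ∑ s ∈ Finset.univ \ Iᶜ.powerset, W s = 1 - a ^ I.card := by
    have := Finset.sum_sdiff (Finset.subset_univ (Iᶜ.powerset : Finset (Finset (Fin n)))) (f := W)
    rw [hsum1, sumW_univ a] at this
    linarith
  have hA : {ω | X ω ∩ I = ∅} = ⋃ s ∈ Iᶜ.powerset, {ω | X ω = s} := by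
    ext ω
    simp only [Set.mem_setOf_eq, Set.mem_iUnion]
    constructor
    · intro h; exact ⟨X ω, (hmem _).mpr h, rfl⟩
    · rintro ⟨s, hs, rfl⟩; exact (hmem _).mp hs
  have hB : {ω | X ω ∩ I ≠ ∅} = ⋃ s ∈ Finset.univ \ Iᶜ.powerset, {ω | X ω = s} := by
    ext ω
    simp only [Set.mem_setOf_eq, Set.mem_iUnion, Finset.mem_sdiff, Finset.mem_univ, true_and]
    constructor
    · intro h; exact ⟨X ω, fun hc => h ((hmem _).mp hc), rfl⟩
    · rintro ⟨s, hs, rfl⟩ hc; exact hs ((hmem _).mpr hc)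
  have hle1 : μ {ω | X ω ∩ I = ∅} ≤ ENNReal.ofReal (a ^ I.card) := by
    rw [hA, ← hsum1, ENNReal.ofReal_sum_of_nonneg (fun s _ => hWnn s)]
    refine le_trans (measure_biUnion_finset_le _ _) ?_
    exact Finset.sum_le_sum fun s _ => le_of_eq (hX s)
  have hle2 : μ {ω | X ω ∩ I ≠ ∅} ≤ ENNReal.ofReal (1 - a ^ I.card) := by
    rw [hB, ← hsum2, ENNReal.ofReal_sum_of_nonneg (fun s _ => hWnn s)]
    refine le_trans (measure_biUnion_finset_le _ _) ?_
    exact Finset.sum_le_sum fun s _ => le_of_eq (hX s)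
  have htot : ENNReal.ofReal (a ^ I.card) + ENNReal.ofReal (1 - a ^ I.card)
      ≤ μ {ω | X ω ∩ I = ∅} + μ {ω | X ω ∩ I ≠ ∅} := by
    rw [← ENNReal.ofReal_add (by positivity) (by linarith)]
    have h1 : ENNReal.ofReal (a ^ I.card + (1 - a ^ I.card)) = 1 := by
      norm_num
    rw [h1]
    have : (1 : ENNReal) = μ Set.univ := (measure_univ).symm
    rw [this]
    have hcup : (Set.univ : Set Ω) ⊆ {ω | X ω ∩ I = ∅} ∪ {ω | X ω ∩ I ≠ ∅} := by
      intro ω _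
      by_cases h : X ω ∩ I = ∅
      · exact Or.inl h
      · exact Or.inr h
    exact le_trans (measure_mono hcup) (measure_union_le _ _)
  exact ennreal_cancel hle1 hle2 htot ENNReal.ofReal_ne_top ENNReal.ofReal_ne_top

open MeasureTheory

lemma one_sub_rpow_le {x : ℝ} (hx : 0 ≤ x) : 1 - (2:ℝ) ^ (-x) ≤ x := by
  have h2 : (0:ℝ) < 2 := by norm_num
  rw [Real.rpow_def_of_pos h2]
  have h1 : (-(Real.log 2 * x)) + 1 ≤ Real.exp (-(Real.log 2 * x)) := Real.add_one_le_exp _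
  have hlog : Real.log 2 ≤ 1 := by
    have := Real.log_le_sub_one_of_pos h2
    linarith
  have hlognn : 0 ≤ Real.log 2 := Real.log_nonneg (by norm_num)
  have hx2 : Real.log 2 * x ≤ 1 * x := mul_le_mul_of_nonneg_right hlog hx
  have h3 := Real.add_one_le_exp (Real.log 2 * (-x))
  have he : Real.log 2 * (-x) = -(Real.log 2 * x) := by ring
  rw [he] at h3
  have he2 : Real.exp (Real.log 2 * (-x)) = Real.exp (-(Real.log 2 * x)) := by rw [he]
  rw [he2]
  linarith

lemma nat_E_gap (i m : ℕ) : 2 ^ (i^2) + m ≤ 2 ^ ((i+m)^2) := by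
  have hm : m ≤ m^2 := Nat.le_self_pow two_ne_zero m
  have h1 : i^2 + m ≤ (i+m)^2 := by
    have hexp : (i+m)^2 = i^2 + (2*i*m + m^2) := by ring
    rw [hexp]
    have : m ≤ 2*i*m + m^2 := le_trans hm (Nat.le_add_left _ _)
    omega
  have h2 : (2:ℕ)^(i^2+m) ≤ 2^((i+m)^2) := Nat.pow_le_pow_right (by norm_num) h1
  have h3 : m + 1 ≤ 2^m := (Nat.lt_two_pow_self (n := m))
  have h4 : 1 ≤ (2:ℕ)^(i^2) := Nat.one_le_two_pow
  calc 2^(i^2) + m ≤ 2^(i^2) * (m+1) := by nlinarith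
    _ ≤ 2^(i^2) * 2^m := Nat.mul_le_mul_left _ h3
    _ = 2^(i^2+m) := (pow_add 2 _ m).symm
    _ ≤ _ := h2

lemma tsum_tail_geo (K : ℕ) :
    ∑' k : ℕ, (if k < K then (1:ENNReal) else (2⁻¹)^(k - K + 1)) = K + 1 := by
  have hsplit : ∀ k : ℕ, (if k < K then (1:ENNReal) else (2⁻¹)^(k - K + 1))
      = (if k < K then (1:ENNReal) else 0) + (if K ≤ k then (2⁻¹:ENNReal)^(k - K + 1) else 0) := by
    intro k
    by_cases h : k < K
    · simp [h, Nat.not_le.mpr h]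
    · simp [h, Nat.le_of_not_lt h]
  rw [tsum_congr hsplit, ENNReal.tsum_add]
  have h1 : ∑' k : ℕ, (if k < K then (1:ENNReal) else 0) = K := by
    rw [tsum_eq_sum (s := Finset.range K)
      (fun b hb => by rw [Finset.mem_range] at hb; simp [hb])]
    rw [Finset.sum_congr rfl (fun k hk => if_pos (Finset.mem_range.mp hk))]
    simp
  have h2 : ∑' k : ℕ, (if K ≤ k then (2⁻¹:ENNReal)^(k - K + 1) else 0) = 1 := by
    have hinj : Function.Injective (fun m : ℕ => K + m) := fun a b h => Nat.add_left_cancel h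
    have hsupp : Function.support (fun k : ℕ => if K ≤ k then (2⁻¹:ENNReal)^(k - K + 1) else 0)
        ⊆ Set.range (fun m => K + m) := by
      intro k hk
      simp only [Function.mem_support] at hk
      by_cases h : K ≤ k
      · exact ⟨k - K, Nat.add_sub_cancel' h⟩
      · simp [h] at hk
    rw [← hinj.tsum_eq hsupp]
    simp only [le_add_iff_nonneg_right, zero_le, if_true, Nat.add_sub_cancel_left]
    calc ∑' m:ℕ, (2⁻¹:ENNReal)^(m+1) = ∑' m:ℕ, 2⁻¹ * (2⁻¹:ENNReal)^m := by
          refine tsum_congr fun m => ?_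
          rw [pow_succ']
      _ = 2⁻¹ * ∑' m:ℕ, (2⁻¹:ENNReal)^m := ENNReal.tsum_mul_left
      _ = 2⁻¹ * (1 - 2⁻¹)⁻¹ := by rw [ENNReal.tsum_geometric]
      _ = 1 := by
          rw [ENNReal.one_sub_inv_two, inv_inv]
          exact ENNReal.inv_mul_cancel (by norm_num) (by norm_num)
  rw [h1, h2]
open MeasureTheory

lemma lintegral_nat_le_tsum {Ω : Type} [MeasurableSpace Ω] (μ : Measure Ω) (f : Ω → ℕ) :
    ∫⁻ ω, (f ω : ENNReal) ∂μ ≤ ∑' k : ℕ, μ {ω | k < f ω} := by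
  have hpt : ∀ ω, (f ω : ENNReal)
      = ∑' k : ℕ, Set.indicator {ω' | k < f ω'} (fun _ => (1:ENNReal)) ω := by
    intro ω
    rw [tsum_eq_sum (s := Finset.range (f ω)) (fun k hk => by
      rw [Finset.mem_range] at hk
      exact Set.indicator_of_notMem (by simpa using hk) _)]
    rw [Finset.sum_congr rfl (fun k hk =>
      Set.indicator_of_mem (by simpa using Finset.mem_range.mp hk) _)]
    simp
  calc ∫⁻ ω, (f ω : ENNReal) ∂μ
      = ∫⁻ ω, ∑' k : ℕ, Set.indicator {ω' | k < f ω'} (fun _ => (1:ENNReal)) ω ∂μ := by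
        exact lintegral_congr hpt
    _ ≤ ∫⁻ ω, ∑' k : ℕ, Set.indicator (toMeasurable μ {ω' | k < f ω'}) (fun _ => (1:ENNReal)) ω ∂μ := by
        refine lintegral_mono fun ω => ENNReal.tsum_le_tsum fun k => ?_
        exact Set.indicator_le_indicator_of_subset (subset_toMeasurable μ _) (fun _ => zero_le) ω
    _ = ∑' k : ℕ, ∫⁻ ω, Set.indicator (toMeasurable μ {ω' | k < f ω'}) (fun _ => (1:ENNReal)) ω ∂μ := by
        exact lintegral_tsum fun k =>
          ((measurable_const.indicator (measurableSet_toMeasurable μ _))).aemeasurable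
    _ = ∑' k : ℕ, μ (toMeasurable μ {ω' | k < f ω'}) := by
        refine tsum_congr fun k => ?_
        exact lintegral_indicator_one (measurableSet_toMeasurable μ _)
    _ = ∑' k : ℕ, μ {ω' | k < f ω'} := tsum_congr fun k => measure_toMeasurable _

open MeasureTheory ProbabilityTheory

set_option maxHeartbeats 1600000 in
/-- For `Δ_i = 2^{2^{i²}}` and independent random subsets `Q_i ⊆ [n]` (each element
included independently with probability `1 − 2^{−1/Δ_i}`), a fixed `I ⊆ [n]` of size
`d`, `i₀` the least index `i ≥ 1` with `Q_i ∩ I = ∅`, and `D = 2·Δ_{i₀}·log₂(2/δ)`: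
`E[i₀] ≤ √L + 3`, and with probability at least `1 − δ`,
`d ≤ D ≤ 2·(2d/δ)^{2^{2√L + 1}}·log₂(2/δ)`, where `L = log₂ log₂ (2d/δ)`. -/
theorem stmt15 {n : ℕ} (δ : ℝ) (hδ : 0 < δ) (hδ1 : δ < 1)
    (d : ℕ) (hd : 1 ≤ d) (hdn : d ≤ n)
    (L : ℝ) (hL : L = Real.logb 2 (Real.logb 2 (2 * (d : ℝ) / δ)))
    (Δ : ℕ → ℝ) (hΔ : ∀ i, Δ i = (2 : ℝ) ^ ((2 : ℝ) ^ ((i : ℝ) ^ 2)))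
    {Ω : Type} [MeasurableSpace Ω] (μ : Measure Ω) [IsProbabilityMeasure μ]
    (Q : ℕ → Ω → Finset (Fin n))
    (hindep : iIndepFun (m := fun _ => (⊤ : MeasurableSpace (Finset (Fin n)))) Q μ)
    (hdist : ∀ i, 1 ≤ i → ∀ s : Finset (Fin n),
      μ {ω | Q i ω = s} = ENNReal.ofReal (∏ j : Fin n,
        if j ∈ s then 1 - (2 : ℝ) ^ (-(1 / Δ i)) else (2 : ℝ) ^ (-(1 / Δ i))))
    (I : Finset (Fin n)) (hI : I.card = d)
    (i₀ : Ω → ℕ) (hi₀ : ∀ ω, i₀ ω = sInf {i | 1 ≤ i ∧ Q i ω ∩ I = ∅})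
    (D : Ω → ℝ) (hD : ∀ ω, D ω = 2 * Δ (i₀ ω) * Real.logb 2 (2 / δ)) :
    ∫⁻ ω, (i₀ ω : ENNReal) ∂μ ≤ ENNReal.ofReal (Real.sqrt L + 3) ∧
      ENNReal.ofReal (1 - δ) ≤
        μ {ω | (d : ℝ) ≤ D ω ∧
          D ω ≤ 2 * (2 * (d : ℝ) / δ) ^ ((2 : ℝ) ^ (2 * Real.sqrt L + 1)) *
            Real.logb 2 (2 / δ)} := by
  classical
  have h2 : (0:ℝ) < 2 := two_pos
  have hdpos : (0:ℝ) < d := by exact_mod_cast hd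
  have hd1 : (1:ℝ) ≤ (d:ℝ) := by exact_mod_cast hd
  set c : ℝ := Real.logb 2 (2/δ) with hc
  set c' : ℝ := Real.logb 2 (2*(d:ℝ)/δ) with hc'
  have hrat : (2:ℝ) < 2/δ := by
    rw [lt_div_iff₀ hδ]; nlinarith
  have hrat' : (2:ℝ) < 2*(d:ℝ)/δ := by
    rw [lt_div_iff₀ hδ]; nlinarith
  have hc1 : 1 < c := by
    have := Real.logb_lt_logb (by norm_num : (1:ℝ) < 2) h2 hrat
    simpa using this
  have hc'1 : 1 < c' := by
    have := Real.logb_lt_logb (by norm_num : (1:ℝ) < 2) h2 hrat'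
    simpa using this
  have h2c : (2:ℝ) ^ c = 2/δ := Real.rpow_logb h2 (by norm_num) (by linarith)
  have h2c' : (2:ℝ) ^ c' = 2*(d:ℝ)/δ := Real.rpow_logb h2 (by norm_num) (by linarith)
  have hLc : L = Real.logb 2 c' := hL
  have hLpos : 0 < L := by
    rw [hLc]; exact Real.logb_pos (by norm_num) hc'1
  have h2L : (2:ℝ) ^ L = c' := by
    rw [hLc]; exact Real.rpow_logb h2 (by norm_num) (by linarith)
  have hsq : Real.sqrt L * Real.sqrt L = L := Real.mul_self_sqrt hLpos.le
  have hsqnn : (0:ℝ) ≤ Real.sqrt L := Real.sqrt_nonneg L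
  set T : ℕ := max 1 ⌈Real.sqrt L⌉₊ with hT
  have hT1 : 1 ≤ T := le_max_left _ _
  have hTge : Real.sqrt L ≤ (T:ℝ) := by
    refine le_trans (Nat.le_ceil _) ?_
    exact_mod_cast Nat.cast_le.mpr (le_max_right 1 _)
  have hTle : (T:ℝ) ≤ Real.sqrt L + 1 := by
    rw [hT]
    push_cast [Nat.cast_max]
    refine max_le (by linarith) ?_
    exact le_of_lt (Nat.ceil_lt_add_one hsqnn)
  have hΔpos : ∀ i, 0 < Δ i := fun i => by rw [hΔ]; positivity
  have hΔnat : ∀ i : ℕ, Δ i = (2:ℝ) ^ (((2^(i^2) : ℕ) : ℝ)) := by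
    intro i
    rw [hΔ]
    congr 1
    rw [show ((i:ℝ)^2) = (((i^2 : ℕ)):ℝ) by push_cast; ring]
    rw [Real.rpow_natCast]
    push_cast
    ring
  set a : ℕ → ℝ := fun i => (2:ℝ) ^ (-(1/Δ i)) with ha
  have hapos : ∀ i, 0 < a i := fun i => Real.rpow_pos_of_pos h2 _
  have hale1 : ∀ i, a i ≤ 1 := fun i =>
    Real.rpow_le_one_of_one_le_of_nonpos (by norm_num)
      (neg_nonpos.mpr (one_div_nonneg.mpr (hΔpos i).le))
  have hapow : ∀ i, a i ^ d = (2:ℝ) ^ (-((d:ℝ)/Δ i)) := by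
    intro i
    rw [ha]
    rw [← Real.rpow_natCast ((2:ℝ) ^ (-(1/Δ i))) d, ← Real.rpow_mul (le_of_lt h2)]
    congr 1
    field_simp
  have hmeas : ∀ i, 1 ≤ i →
      μ {ω | Q i ω ∩ I = ∅} = ENNReal.ofReal ((2:ℝ) ^ (-((d:ℝ)/Δ i))) ∧
      μ {ω | Q i ω ∩ I ≠ ∅} = ENNReal.ofReal (1 - (2:ℝ) ^ (-((d:ℝ)/Δ i))) := by
    intro i hi
    have := meas_QI μ (Q i) (a i) (hapos i).le (hale1 i) (hdist i hi) I
    rw [hI, hapow i] at this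
    exact this
  have hΔmono : ∀ i j : ℕ, i ≤ j → Δ i ≤ Δ j := by
    intro i j hij
    rw [hΔnat i, hΔnat j]
    apply Real.rpow_le_rpow_of_exponent_le (by norm_num)
    exact_mod_cast Nat.pow_le_pow_right (by norm_num) (Nat.pow_le_pow_left hij 2)
  have hΔT : 2*(d:ℝ)/δ ≤ Δ T := by
    rw [← h2c', hΔ]
    apply Real.rpow_le_rpow_of_exponent_le (by norm_num)
    rw [← h2L]
    apply Real.rpow_le_rpow_of_exponent_le (by norm_num)
    calc L = Real.sqrt L * Real.sqrt L := hsq.symm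
      _ ≤ (T:ℝ) * (T:ℝ) := mul_le_mul hTge hTge hsqnn (by positivity)
      _ = (T:ℝ)^2 := (sq (T:ℝ)).symm
  have hΔgt : ∀ i : ℕ, (i:ℝ) < Δ i := by
    intro i
    rw [hΔnat i]
    have h1 : (i:ℝ) < ((2^i : ℕ) : ℝ) := by exact_mod_cast (Nat.lt_two_pow_self (n := i))
    refine lt_of_lt_of_le h1 ?_
    rw [show (((2^i : ℕ)):ℝ) = (2:ℝ) ^ ((i:ℕ):ℝ) by rw [Real.rpow_natCast]; push_cast; ring]
    apply Real.rpow_le_rpow_of_exponent_le (by norm_num)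
    have hnat : i ≤ 2^(i^2) := le_trans ((Nat.lt_two_pow_self (n := i))).le
      (Nat.pow_le_pow_right (by norm_num) (Nat.le_self_pow two_ne_zero i))
    exact_mod_cast hnat
  constructor
  · -- Part 1
    refine le_trans (lintegral_nat_le_tsum μ i₀) ?_
    set K : ℕ := T + 1 with hK
    have hstep : ∀ k : ℕ, μ {ω | k < i₀ ω} ≤ (if k < K then (1:ENNReal) else (2⁻¹)^(k - K + 1)) := by
      intro k
      by_cases hk : k < K
      · rw [if_pos hk]; exact prob_le_one
      · rw [if_neg hk]
        push_neg at hk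
        obtain ⟨m, rfl⟩ := Nat.exists_eq_add_of_le hk
        have hsub : {ω | K + m < i₀ ω} ⊆ {ω | Q (K+m) ω ∩ I ≠ ∅} := by
          intro ω hω
          simp only [Set.mem_setOf_eq] at hω ⊢
          intro hcon
          have hmem : (K+m) ∈ {i | 1 ≤ i ∧ Q i ω ∩ I = ∅} := ⟨by omega, hcon⟩
          have hle := Nat.sInf_le hmem
          rw [← hi₀ ω] at hle
          omega
        refine le_trans (measure_mono hsub) ?_
        rw [(hmeas (K+m) (by omega)).2]
        have hΔKm : (2:ℝ) ^ (c' + ((m:ℝ)+1)) ≤ Δ (K+m) := by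
          rw [hΔ]
          apply Real.rpow_le_rpow_of_exponent_le (by norm_num)
          have hKc : ((K:ℕ):ℝ) = (T:ℝ) + 1 := by rw [hK]; push_cast; ring
          have h1 : Real.sqrt L + ((m:ℝ)+1) ≤ ((K+m : ℕ):ℝ) := by
            push_cast
            push_cast at hKc
            linarith [hTge]
          have h2' : L + ((m:ℝ)+1)^2 ≤ (((K+m:ℕ)):ℝ)^2 := by
            have hnn : (0:ℝ) ≤ Real.sqrt L + ((m:ℝ)+1) := by positivity
            have hsqle := mul_self_le_mul_self hnn h1
            have hnn2 : (0:ℝ) ≤ Real.sqrt L * ((m:ℝ)+1) := by positivity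
            nlinarith [hsqle, hsq, hnn2]
          have h3 : (2:ℝ)^(L + ((m:ℝ)+1)^2) ≤ 2^((((K+m:ℕ)):ℝ)^2) :=
            Real.rpow_le_rpow_of_exponent_le (by norm_num) h2'
          refine le_trans ?_ h3
          rw [Real.rpow_add h2 L]
          have h4 : ((m:ℝ)+2) ≤ (2:ℝ)^(((m:ℝ)+1)^2) := by
            have hnat : m+2 ≤ 2^((m+1)^2) := le_trans ((Nat.lt_two_pow_self (n := m+1)))
              (Nat.pow_le_pow_right (by norm_num) (Nat.le_self_pow two_ne_zero (m+1)))
            have hcast : ((m:ℝ)+1)^2 = (((m+1)^2 : ℕ):ℝ) := by push_cast; ring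
            rw [hcast, Real.rpow_natCast]
            exact_mod_cast hnat
          have h5 : (1:ℝ) ≤ (2:ℝ)^L := Real.one_le_rpow (by norm_num) hLpos.le
          rw [← h2L]
          have hA := mul_le_mul_of_nonneg_left h4 (by linarith : (0:ℝ) ≤ (2:ℝ)^L)
          have hB := mul_le_mul_of_nonneg_right h5 (by positivity : (0:ℝ) ≤ (m:ℝ)+1)
          linarith [hA, hB]
        have hdle : (d:ℝ) ≤ (2:ℝ)^c' := by
          rw [h2c', le_div_iff₀ hδ]
          nlinarith
        have hdiv : (d:ℝ)/Δ (K+m) ≤ (2:ℝ)^(-(((m:ℝ))+1)) := by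
          have hq : (2:ℝ)^c' / (2:ℝ)^(c' + ((m:ℝ)+1)) = (2:ℝ)^(-(((m:ℝ))+1)) := by
            rw [← Real.rpow_sub h2]
            congr 1
            ring
          rw [← hq]
          exact div_le_div₀ (Real.rpow_pos_of_pos h2 c').le hdle
            (Real.rpow_pos_of_pos h2 _) hΔKm
        have hreal : 1 - (2:ℝ)^(-((d:ℝ)/Δ (K+m))) ≤ (2:ℝ)^(-(((m:ℝ))+1)) := by
          refine le_trans (one_sub_rpow_le ?_) hdiv
          exact div_nonneg hdpos.le (hΔpos _).le
        have heq : (K+m) - K + 1 = m + 1 := by omega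
        rw [heq]
        refine le_trans (ENNReal.ofReal_le_ofReal hreal) (le_of_eq ?_)
        have hre : (2:ℝ)^(-(((m:ℝ))+1)) = ((1/2:ℝ))^(m+1) := by
          rw [show -(((m:ℝ))+1) = -(((m+1:ℕ)):ℝ) by push_cast; ring,
            Real.rpow_neg (by norm_num), Real.rpow_natCast, one_div, inv_pow]
        rw [hre, ENNReal.ofReal_pow (by norm_num)]
        congr 1
        rw [show (1/2:ℝ) = (2:ℝ)⁻¹ by norm_num, ENNReal.ofReal_inv_of_pos h2]
        norm_num
    refine le_trans (ENNReal.tsum_le_tsum hstep) ?_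
    rw [tsum_tail_geo K]
    have hKcast : ((K:ℕ):ENNReal) + 1 = ENNReal.ofReal ((K:ℝ) + 1) := by
      rw [ENNReal.ofReal_add (by positivity) (by norm_num), ENNReal.ofReal_one,
        ENNReal.ofReal_natCast]
    rw [hKcast]
    apply ENNReal.ofReal_le_ofReal
    have hKr : (K:ℝ) = (T:ℝ) + 1 := by rw [hK]; push_cast; ring
    linarith
  · -- Part 2
    set badF : Finset ℕ := (Finset.Icc 1 d).filter (fun i => 2 * Δ i * c < d) with hbadF
    set G : Set Ω := {ω | (∀ i ∈ badF, Q i ω ∩ I ≠ ∅) ∧ Q T ω ∩ I = ∅} with hG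
    have hGsub : G ⊆ {ω | (d:ℝ) ≤ D ω ∧
        D ω ≤ 2 * (2*(d:ℝ)/δ) ^ ((2:ℝ)^(2*Real.sqrt L + 1)) * c} := by
      intro ω hω
      obtain ⟨hbad, hTω⟩ := hω
      have hSmem : (i₀ ω) ∈ {i : ℕ | 1 ≤ i ∧ Q i ω ∩ I = ∅} := by
        rw [hi₀]
        exact Nat.sInf_mem ⟨T, hT1, hTω⟩
      obtain ⟨hi1, hiI⟩ := hSmem
      have hiT : i₀ ω ≤ T := by
        rw [hi₀]
        exact Nat.sInf_le ⟨hT1, hTω⟩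
      constructor
      · by_contra hcon
        push_neg at hcon
        rw [hD] at hcon
        have hΔd : Δ (i₀ ω) < d := by nlinarith [hΔpos (i₀ ω)]
        have hid : i₀ ω ≤ d := by
          have hlt : (i₀ ω : ℝ) < (d:ℝ) := lt_trans (hΔgt _) hΔd
          have : i₀ ω < d := by exact_mod_cast hlt
          exact this.le
        have hmem : i₀ ω ∈ badF := by
          rw [hbadF, Finset.mem_filter, Finset.mem_Icc]
          exact ⟨⟨hi1, hid⟩, hcon⟩
        exact (hbad _ hmem) hiI
      · rw [hD]
        have hΔle : Δ (i₀ ω) ≤ Δ T := hΔmono _ _ hiT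
        have hexp : (T:ℝ)^2 ≤ L + (2*Real.sqrt L + 1) := by
          nlinarith [hTle, hsq, hsqnn, (Nat.cast_nonneg T : (0:ℝ) ≤ (T:ℝ))]
        have hRpow : Δ T ≤ (2*(d:ℝ)/δ) ^ ((2:ℝ)^(2*Real.sqrt L + 1)) := by
          rw [← h2c', ← Real.rpow_mul h2.le, hΔ]
          apply Real.rpow_le_rpow_of_exponent_le (by norm_num)
          rw [← h2L, ← Real.rpow_add h2]
          exact Real.rpow_le_rpow_of_exponent_le (by norm_num) hexp
        have hΔR := le_trans hΔle hRpow
        have hfin := mul_le_mul_of_nonneg_right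
          (mul_le_mul_of_nonneg_left hΔR (by norm_num : (0:ℝ) ≤ 2)) (by linarith : (0:ℝ) ≤ c)
        linarith [hfin]
    have hGc_sub : Gᶜ ⊆ (⋃ i ∈ badF, {ω | Q i ω ∩ I = ∅}) ∪ {ω | Q T ω ∩ I ≠ ∅} := by
      intro ω hω
      by_cases hT' : Q T ω ∩ I = ∅
      · have hnall : ¬ (∀ i ∈ badF, Q i ω ∩ I ≠ ∅) := by
          intro hall
          exact hω ⟨hall, hT'⟩
        push_neg at hnall
        obtain ⟨i, hi, hQ⟩ := hnall
        exact Or.inl (Set.mem_biUnion hi hQ)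
      · exact Or.inr hT'
    have hsumbad : ∑ i ∈ badF, (2:ℝ)^(-((d:ℝ)/Δ i)) ≤ δ^2/2 := by
      rcases Finset.eq_empty_or_nonempty badF with he | hne
      · rw [he, Finset.sum_empty]
        positivity
      · have hbmem : badF.max' hne ∈ badF := badF.max'_mem hne
        have hbbad : 2 * Δ (badF.max' hne) * c < d := by
          have := (Finset.mem_filter.mp hbmem).2
          simpa using this
        have hkey : ∀ i ∈ badF,
            (2:ℝ)^(-((d:ℝ)/Δ i)) ≤ δ^2/4 * (1/2:ℝ)^(badF.max' hne - i) := by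
          intro i hi
          have hib : i ≤ badF.max' hne := Finset.le_max' badF i hi
          obtain ⟨m, hm⟩ := Nat.exists_eq_add_of_le hib
          have hmsub : badF.max' hne - i = m := by omega
          rw [hmsub]
          have hm2 : (m:ℝ) + 1 ≤ (2:ℝ)^((m:ℕ):ℝ) := by
            rw [Real.rpow_natCast]
            exact_mod_cast (Nat.lt_two_pow_self (n := m))
          have h2mpos : (0:ℝ) < (2:ℝ)^((m:ℕ):ℝ) := Real.rpow_pos_of_pos h2 _
          have hratio : (2:ℝ)^((m:ℕ):ℝ) * Δ i ≤ Δ (i+m) := by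
            rw [hΔnat i, hΔnat (i+m), ← Real.rpow_add h2]
            apply Real.rpow_le_rpow_of_exponent_le (by norm_num)
            have hEgap := nat_E_gap i m
            rw [Nat.add_comm] at hEgap
            exact_mod_cast hEgap
          have hd2c : 2*c < (d:ℝ)/Δ (badF.max' hne) := by
            rw [lt_div_iff₀ (hΔpos _)]
            nlinarith [hbbad]
          have hdiv2 : (2:ℝ)^((m:ℕ):ℝ) * ((d:ℝ)/Δ (badF.max' hne)) ≤ (d:ℝ)/Δ i := by
            rw [hm]
            rw [mul_div_assoc', div_le_div_iff₀ (hΔpos (i+m)) (hΔpos i)]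
            nlinarith [hratio, hdpos, hΔpos i, hΔpos (i+m), h2mpos]
          have hchain : 2*c + (m:ℝ) ≤ (d:ℝ)/Δ i := by
            have hA := mul_le_mul_of_nonneg_left hd2c.le h2mpos.le
            have hB := mul_le_mul_of_nonneg_left hm2 (by linarith : (0:ℝ) ≤ 2*c)
            nlinarith [hA, hB, hdiv2, (Nat.cast_nonneg m : (0:ℝ) ≤ (m:ℝ)), hc1]
          have hmono : (2:ℝ)^(-((d:ℝ)/Δ i)) ≤ (2:ℝ)^(-(2*c + (m:ℝ))) :=
            Real.rpow_le_rpow_of_exponent_le (by norm_num) (neg_le_neg hchain)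
          refine le_trans hmono (le_of_eq ?_)
          rw [show -(2*c + (m:ℝ)) = (c * (-2)) + (-((m:ℕ):ℝ)) by push_cast; ring,
            Real.rpow_add h2, Real.rpow_mul h2.le, h2c]
          have hleft : (2/δ) ^ ((-2):ℝ) = δ^2/4 := by
            have hpos : (0:ℝ) ≤ 2/δ := by positivity
            rw [show ((-2):ℝ) = -((2:ℕ):ℝ) by norm_num, Real.rpow_neg hpos,
              Real.rpow_natCast, div_pow, inv_div]
            norm_num
          have hright : (2:ℝ) ^ (-((m:ℕ):ℝ)) = (1/2:ℝ)^m := by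
            rw [Real.rpow_neg h2.le, Real.rpow_natCast, one_div, inv_pow]
          rw [hleft, hright]
        have hsub : badF ⊆ Finset.Icc 1 (badF.max' hne) := by
          intro i hi
          refine Finset.mem_Icc.mpr ⟨?_, Finset.le_max' _ _ hi⟩
          exact (Finset.mem_Icc.mp (Finset.mem_filter.mp hi).1).1
        have hgeo : ∑ i ∈ Finset.Icc 1 (badF.max' hne), (1/2:ℝ)^(badF.max' hne - i)
            = ∑ j ∈ Finset.range (badF.max' hne), (1/2:ℝ)^j := by
          refine Finset.sum_nbij' (fun i => badF.max' hne - i) (fun j => badF.max' hne - j)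
            ?_ ?_ ?_ ?_ ?_
          · intro i hi
            rw [Finset.mem_Icc] at hi
            rw [Finset.mem_range]
            omega
          · intro j hj
            rw [Finset.mem_range] at hj
            rw [Finset.mem_Icc]
            omega
          · intro i hi
            rw [Finset.mem_Icc] at hi
            omega
          · intro j hj
            rw [Finset.mem_range] at hj
            omega
          · intro i hi
            rfl
        calc ∑ i ∈ badF, (2:ℝ)^(-((d:ℝ)/Δ i))
            ≤ ∑ i ∈ badF, δ^2/4 * (1/2:ℝ)^(badF.max' hne - i) := Finset.sum_le_sum hkey
          _ ≤ ∑ i ∈ Finset.Icc 1 (badF.max' hne), δ^2/4 * (1/2:ℝ)^(badF.max' hne - i) :=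
              Finset.sum_le_sum_of_subset_of_nonneg hsub (fun i _ _ => by positivity)
          _ = δ^2/4 * ∑ i ∈ Finset.Icc 1 (badF.max' hne), (1/2:ℝ)^(badF.max' hne - i) :=
              (Finset.mul_sum _ _ _).symm
          _ = δ^2/4 * ∑ j ∈ Finset.range (badF.max' hne), (1/2:ℝ)^j := by rw [hgeo]
          _ ≤ δ^2/4 * 2 := by
              have := sum_geometric_two_le (badF.max' hne)
              nlinarith [sq_nonneg δ]
          _ = δ^2/2 := by ring
    have hbad_meas : μ (⋃ i ∈ badF, {ω | Q i ω ∩ I = ∅}) ≤ ENNReal.ofReal (δ^2/2) := by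
      refine le_trans (measure_biUnion_finset_le _ _) ?_
      have hcongr : ∀ i ∈ badF, μ {ω | Q i ω ∩ I = ∅}
          = ENNReal.ofReal ((2:ℝ)^(-((d:ℝ)/Δ i))) := by
        intro i hi
        exact (hmeas i (Finset.mem_Icc.mp (Finset.mem_filter.mp hi).1).1).1
      rw [Finset.sum_congr rfl hcongr,
        ← ENNReal.ofReal_sum_of_nonneg (fun i _ => (Real.rpow_pos_of_pos h2 _).le)]
      exact ENNReal.ofReal_le_ofReal hsumbad
    have hT_meas : μ {ω | Q T ω ∩ I ≠ ∅} ≤ ENNReal.ofReal (δ/2) := by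
      rw [(hmeas T hT1).2]
      apply ENNReal.ofReal_le_ofReal
      refine le_trans (one_sub_rpow_le (div_nonneg hdpos.le (hΔpos T).le)) ?_
      rw [div_le_iff₀ (hΔpos T)]
      have hT2 := hΔT
      rw [div_le_iff₀ hδ] at hT2
      nlinarith [hT2]
    have hGcle : μ Gᶜ ≤ ENNReal.ofReal δ := by
      refine le_trans (measure_mono hGc_sub) ?_
      refine le_trans (measure_union_le _ _) ?_
      refine le_trans (add_le_add hbad_meas hT_meas) ?_
      rw [← ENNReal.ofReal_add (by positivity) (by positivity)]
      apply ENNReal.ofReal_le_ofReal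
      nlinarith
    have huniv : (1:ENNReal) ≤ μ G + μ Gᶜ := by
      rw [← measure_univ (μ := μ)]
      refine le_trans (measure_mono ?_) (measure_union_le G Gᶜ)
      rw [Set.union_compl_self]
    have h1G : ENNReal.ofReal (1-δ) ≤ μ G := by
      have hsum' : ENNReal.ofReal (1-δ) + ENNReal.ofReal δ = 1 := by
        rw [← ENNReal.ofReal_add (by linarith) hδ.le]
        norm_num
      have hfin : ENNReal.ofReal (1-δ) + ENNReal.ofReal δ ≤ μ G + ENNReal.ofReal δ := by
        rw [hsum']
        exact le_trans huniv (add_le_add le_rfl hGcle)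
      exact (ENNReal.add_le_add_iff_right ENNReal.ofReal_ne_top).mp hfin
    exact le_trans h1G (measure_mono hGsub)
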